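/- Let d ≥ 1, let U ⊆ ℝ^d be an open set with finitely many connected components, let g be real analytic on U, and let μ be a finite Borel measure on ℝ^d with μ(ℝ^d \ U) = 0 which is absolutely continuous with respect to d-dimensional Lebesgue measure. Let U_disc be the union of those connected components of U on which g is constant, and let U_cont := U \ U_disc. Then the pushforward under g of the restriction of μ to U_cont is absolutely continuous with respect to one-dimensional Lebesgue measure, and the pushforward under g of the restriction of μ to U_disc is supported on a finite subset of ℝ. Consequently the pushforward g_*μ is the sum of an absolutely continuous measure and a measure with finitely many atoms. -/

import Mathlib

open MeasureTheory

open Set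
set_option maxHeartbeats 1000000

variable {d : ℕ}

local notation "Eu" => EuclideanSpace ℝ (Fin d)

/-- Preimage of a Lebesgue-null set under a coordinate projection is null. -/
lemma proj_preimage_null (i : Fin d) {N : Set ℝ} (hN : volume N = 0) :
    volume ((fun y : Eu => y i) ⁻¹' N) = 0 := by
  obtain ⟨N', hNN', hN'm, hN'0⟩ := exists_measurable_superset_of_null hN
  refine measure_mono_null (Set.preimage_mono hNN') ?_
  have hmp := EuclideanSpace.volume_preserving_symm_measurableEquiv_toLp (Fin d)
  have : ((fun y : Eu => y i) ⁻¹' N') =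
      (MeasurableEquiv.toLp 2 (Fin d → ℝ)).symm ⁻¹' ((Function.eval i) ⁻¹' N') := rfl
  rw [this, hmp.measure_preimage ((measurable_pi_apply i) hN'm).nullMeasurableSet]
  exact Measure.pi_eval_preimage_null _ hN'0

/-- **Gadget**: near a point where an analytic function has nonvanishing differential,
preimages of null sets are null. -/
lemma gadget {U : Set Eu} (hU : IsOpen U) {φ : Eu → ℝ} (hφm : Measurable φ)
    (hφ : AnalyticOnNhd ℝ φ U) {x : Eu} (hx : x ∈ U) (hder : fderiv ℝ φ x ≠ 0) :
    ∃ V : Set Eu, IsOpen V ∧ x ∈ V ∧ V ⊆ U ∧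
      ∀ N : Set ℝ, volume N = 0 → volume (V ∩ φ ⁻¹' N) = 0 := by
  classical
  set L : Eu →L[ℝ] ℝ := fderiv ℝ φ x with hL
  -- find a coordinate direction on which `L` is nonzero
  have hex : ∃ i : Fin d, L (EuclideanSpace.single i 1) ≠ 0 := by
    by_contra h
    push_neg at h
    refine hder (ContinuousLinearMap.coe_injective ?_)
    refine Module.Basis.ext (EuclideanSpace.basisFun (Fin d) ℝ).toBasis fun i => ?_
    simpa [OrthonormalBasis.coe_toBasis, EuclideanSpace.basisFun_apply] using h i
  obtain ⟨i, hc⟩ := hex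
  set e : Eu := EuclideanSpace.single i 1 with he
  set c : ℝ := L e with hcdef
  set π : Eu →L[ℝ] ℝ := EuclideanSpace.proj i with hπ
  have hπe : π e = 1 := by simp [hπ, he]
  -- the straightening map
  set Ψ : Eu → Eu := fun y => y + (φ y - π y) • e with hΨ
  have hπΨ : ∀ y, π (Ψ y) = φ y := by
    intro y
    simp [hΨ, map_add, _root_.map_smul, hπe, smul_eq_mul]
  have hΨm : Measurable Ψ := by
    apply Measurable.add measurable_id
    exact ((hφm.sub π.continuous.measurable).smul measurable_const)
  have hΨan : AnalyticOnNhd ℝ Ψ U :=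
    analyticOnNhd_id.add ((hφ.sub (π.analyticOnNhd U)).smul analyticOnNhd_const)
  -- derivative of `Ψ` and its explicit inverse
  set A : Eu →L[ℝ] Eu := ContinuousLinearMap.id ℝ Eu + (L - π).smulRight e with hA
  set B : Eu →L[ℝ] Eu := ContinuousLinearMap.id ℝ Eu + (c⁻¹ • (π - L)).smulRight e with hB
  have key : ∀ (y : Eu) (s t : ℝ), s + t = 0 → y + s • e + t • e = y := by
    intro y s t hst
    rw [add_assoc, ← add_smul, hst, zero_smul, add_zero]
  have hBA : Function.LeftInverse B A := by
    intro y
    have h1 : A y = y + (L y - π y) • e := by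
      simp [hA, ContinuousLinearMap.smulRight_apply, ContinuousLinearMap.sub_apply]
    have h2 : B (A y) = A y + (c⁻¹ * (π (A y) - L (A y))) • e := by
      simp [hB, ContinuousLinearMap.smulRight_apply, ContinuousLinearMap.sub_apply,
        ContinuousLinearMap.smul_apply, smul_eq_mul]
    have hπA : π (A y) = π y + (L y - π y) := by
      rw [h1]; simp [map_add, _root_.map_smul, hπe, smul_eq_mul]
    have hLA : L (A y) = L y + (L y - π y) * c := by
      rw [h1]; simp [map_add, _root_.map_smul, smul_eq_mul, hcdef]; try ring
    rw [h2, hπA, hLA, h1]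
    apply key
    field_simp
    try ring
  have hAB : Function.RightInverse B A := by
    intro y
    have h1 : B y = y + (c⁻¹ * (π y - L y)) • e := by
      simp [hB, ContinuousLinearMap.smulRight_apply, ContinuousLinearMap.sub_apply,
        ContinuousLinearMap.smul_apply, smul_eq_mul]
    have h2 : A (B y) = B y + (L (B y) - π (B y)) • e := by
      simp [hA, ContinuousLinearMap.smulRight_apply, ContinuousLinearMap.sub_apply]
    have hπB : π (B y) = π y + c⁻¹ * (π y - L y) := by
      rw [h1]; simp [map_add, _root_.map_smul, hπe, smul_eq_mul]
    have hLB : L (B y) = L y + c⁻¹ * (π y - L y) * c := by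
      rw [h1]; simp [map_add, _root_.map_smul, smul_eq_mul, hcdef]; try ring
    rw [h2, hπB, hLB, h1]
    apply key
    field_simp
    ring
  set A' : Eu ≃L[ℝ] Eu := ContinuousLinearEquiv.equivOfInverse A B hBA hAB with hA'
  have hA'coe : (A' : Eu →L[ℝ] Eu) = A := rfl
  -- strict differentiability of `Ψ` at `x`
  have hφstrict : HasStrictFDerivAt φ L x :=
    ((hφ x hx).contDiffAt (n := 1)).hasStrictFDerivAt one_ne_zero
  have hsm : HasStrictFDerivAt (fun y => (φ y - π y) • e) ((L - π).smulRight e) x := by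
    have h := ((hφstrict.sub π.hasStrictFDerivAt).smul (hasStrictFDerivAt_const e x))
    simp only [smul_zero, zero_add] at h
    exact h
  have hΨstrict : HasStrictFDerivAt Ψ (A' : Eu →L[ℝ] Eu) x := by
    rw [hA'coe, hA]
    exact (hasStrictFDerivAt_id x).add hsm
  set P := hΨstrict.toOpenPartialHomeomorph Ψ with hP
  have hPcoe : ⇑P = Ψ := hΨstrict.toOpenPartialHomeomorph_coe
  -- the determinant of `fderiv Ψ` is continuous and nonzero at `x`
  have hdetcont : ContinuousOn (fun y => (fderiv ℝ Ψ y).det) U :=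
    ContinuousLinearMap.continuous_det.comp_continuousOn (hΨan.fderiv).continuousOn
  have hdetx : (fderiv ℝ Ψ x).det ≠ 0 := by
    rw [hΨstrict.hasFDerivAt.fderiv]
    have : ((A' : Eu →L[ℝ] Eu) : Eu →ₗ[ℝ] Eu) = (A'.toLinearEquiv : Eu →ₗ[ℝ] Eu) := rfl
    rw [ContinuousLinearMap.det, this]
    exact (LinearEquiv.isUnit_det' A'.toLinearEquiv).ne_zero
  set V : Set Eu := P.source ∩ (U ∩ (fun y => (fderiv ℝ Ψ y).det) ⁻¹' ({0}ᶜ)) with hV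
  have hVopen : IsOpen V :=
    P.open_source.inter (hdetcont.isOpen_inter_preimage hU isOpen_compl_singleton)
  have hxV : x ∈ V :=
    ⟨hΨstrict.mem_toOpenPartialHomeomorph_source, hx, by simpa using hdetx⟩
  have hVU : V ⊆ U := fun y hy => hy.2.1
  refine ⟨V, hVopen, hxV, hVU, fun N hN => ?_⟩
  obtain ⟨N', hNN', hN'm, hN'0⟩ := exists_measurable_superset_of_null hN
  set s : Set Eu := V ∩ Ψ ⁻¹' ((fun y : Eu => y i) ⁻¹' N') with hs
  have hsmeas : MeasurableSet s :=
    hVopen.measurableSet.inter (hΨm (π.continuous.measurable hN'm))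
  -- change of variables: the image of `s` under `Ψ` is null, so `s` is null
  have hins : Set.InjOn Ψ s := by
    have := P.injOn
    rw [hPcoe] at this
    exact this.mono (fun y hy => hy.1.1)
  have hf' : ∀ y ∈ s, HasFDerivWithinAt Ψ (fderiv ℝ Ψ y) s y := fun y hy =>
    ((hΨan y (hVU hy.1)).differentiableAt.hasFDerivAt).hasFDerivWithinAt
  have himg : volume (Ψ '' s) = 0 := by
    refine measure_mono_null ?_ (proj_preimage_null i hN'0)
    rintro z ⟨y, hy, rfl⟩
    exact hy.2
  have hjac := lintegral_abs_det_fderiv_eq_addHaar_image (volume : Measure Eu) hsmeas hf' hins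
  rw [himg] at hjac
  have haem : AEMeasurable (fun y => ENNReal.ofReal |(fderiv ℝ Ψ y).det|)
      ((volume : Measure Eu).restrict s) := by
    refine ContinuousOn.aemeasurable ?_ hsmeas
    exact (ENNReal.continuous_ofReal.comp continuous_abs).comp_continuousOn
      (hdetcont.mono (fun y hy => hVU hy.1))
  have hae := (lintegral_eq_zero_iff' haem).mp hjac
  have hfalse : ∀ᵐ y ∂((volume : Measure Eu).restrict s), False := by
    filter_upwards [hae, ae_restrict_mem hsmeas] with y h1 h2
    have hdy : (fderiv ℝ Ψ y).det ≠ 0 := by simpa using h2.1.2.2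
    simp only [Pi.zero_apply, ENNReal.ofReal_eq_zero] at h1
    exact hdy (by nlinarith [abs_nonneg (fderiv ℝ Ψ y).det, abs_eq_zero.mp (le_antisymm h1 (abs_nonneg _))])
  have hs0 : volume s = 0 := by
    rw [← Measure.restrict_apply_univ]
    have : (volume : Measure Eu).restrict s = 0 :=
      ae_eq_bot.mp (Filter.eventually_false_iff_eq_bot.mp hfalse)
    rw [this]; rfl
  refine measure_mono_null ?_ hs0
  rintro y ⟨hyV, hyN⟩
  refine ⟨hyV, ?_⟩
  show (Ψ y) i ∈ N'
  have : π (Ψ y) = φ y := hπΨ y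
  have hπy : π (Ψ y) = (Ψ y) i := rfl
  rw [← hπy, this]
  exact hNN' hyN

lemma null_of_locally_null {S : Set Eu}
    (h : ∀ x ∈ S, ∃ V : Set Eu, IsOpen V ∧ x ∈ V ∧ volume (V ∩ S) = 0) :
    volume S = 0 := by
  refine measure_null_of_locally_null S fun x hx => ?_
  obtain ⟨V, hVo, hxV, hV0⟩ := h x hx
  exact ⟨V ∩ S, Filter.inter_mem (mem_nhdsWithin_of_mem_nhds (hVo.mem_nhds hxV))
    self_mem_nhdsWithin, hV0⟩

/-- The key measure-theoretic fact: the part of a null set's preimage lying over the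
"non-constant" components is Lebesgue-null. -/
lemma main_null {U : Set Eu} (hU : IsOpen U) {g : Eu → ℝ} (hg : AnalyticOnNhd ℝ g U)
    {Ucont : Set Eu}
    (hUcont : Ucont = U \ {y | y ∈ U ∧ ∀ z ∈ connectedComponentIn U y, g z = g y})
    {N : Set ℝ} (hN : volume N = 0) : volume (Ucont ∩ g ⁻¹' N) = 0 := by
  classical
  have hUcU : Ucont ⊆ U := by rw [hUcont]; exact Set.diff_subset
  -- dense sequences of tuples
  set seq : (m : ℕ) → ℕ → (Fin (m + 1) → Eu) :=
    fun m => TopologicalSpace.denseSeq (Fin (m + 1) → Eu) with hseq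
  -- the exceptional sets
  set S : ℕ → ℕ → Set Eu := fun m k =>
    {y | y ∈ U ∧ iteratedFDeriv ℝ m g y = 0 ∧ iteratedFDeriv ℝ (m + 1) g y (seq m k) ≠ 0}
    with hS
  -- each S m k is null
  have hSnull : ∀ m k, volume (S m k) = 0 := by
    intro m k
    refine null_of_locally_null fun x hx => ?_
    obtain ⟨hxU, hx0, hx1⟩ := hx
    set v := seq m k with hv
    set φraw : Eu → ℝ :=
      fun y => ContinuousMultilinearMap.apply ℝ (fun _ : Fin m => Eu) ℝ (Fin.tail v)
        (iteratedFDeriv ℝ m g y) with hφraw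
    have hφrawan : AnalyticOnNhd ℝ φraw U :=
      (ContinuousMultilinearMap.apply ℝ (fun _ : Fin m => Eu) ℝ (Fin.tail v)).comp_analyticOnNhd
        (hg.iteratedFDeriv m)
    set φ : Eu → ℝ := U.piecewise φraw 0 with hφ
    have hφm : Measurable φ :=
      ContinuousOn.measurable_piecewise hφrawan.continuousOn continuousOn_const hU.measurableSet
    have hφan : AnalyticOnNhd ℝ φ U :=
      hφrawan.congr hU fun y hy => (Set.piecewise_eq_of_mem _ _ _ hy).symm
    have hφeq : ∀ᶠ y in nhds x, φ y = φraw y :=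
      Filter.eventually_of_mem (hU.mem_nhds hxU) fun y hy => Set.piecewise_eq_of_mem _ _ _ hy
    have hfderiv_raw : fderiv ℝ φraw x (v 0) = iteratedFDeriv ℝ (m + 1) g x v := by
    -- fderiv of CLM ∘ analytic
      have hd : HasFDerivAt φraw
          ((ContinuousMultilinearMap.apply ℝ (fun _ : Fin m => Eu) ℝ (Fin.tail v)).comp
            (fderiv ℝ (iteratedFDeriv ℝ m g) x)) x :=
        (ContinuousMultilinearMap.apply ℝ (fun _ : Fin m => Eu) ℝ (Fin.tail v)).hasFDerivAt.comp x
          ((hg.iteratedFDeriv m) x hxU).differentiableAt.hasFDerivAt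
      rw [hd.fderiv]
      rw [iteratedFDeriv_succ_apply_left]
      rfl
    have hder : fderiv ℝ φ x ≠ 0 := by
      have : fderiv ℝ φ x = fderiv ℝ φraw x := Filter.EventuallyEq.fderiv_eq hφeq
      rw [this]
      intro h0
      rw [h0] at hfderiv_raw
      exact hx1 (by simpa using hfderiv_raw.symm)
    obtain ⟨V, hVo, hxV, hVU, hVnull⟩ := gadget hU hφm hφan hxU hder
    refine ⟨V, hVo, hxV, ?_⟩
    refine measure_mono_null ?_ (hVnull {0} Real.volume_singleton)
    rintro y ⟨hyV, hyU, hy0, -⟩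
    refine ⟨hyV, ?_⟩
    show φ y ∈ ({0} : Set ℝ)
    rw [hφ, Set.piecewise_eq_of_mem _ _ _ hyU, hφraw]
    simp [hy0]
  -- the critical set is covered by the `S m k`
  set Zcrit : Set Eu := {y | y ∈ Ucont ∧ fderiv ℝ g y = 0} with hZ
  have hZcover : Zcrit ⊆ ⋃ (m : ℕ) (k : ℕ), S m k := by
    rintro x ⟨hxUc, hxcrit⟩
    have hxU : x ∈ U := hUcU hxUc
    -- some iterated derivative of order ≥ 1 is nonzero at x
    have hex : ∃ n, 1 ≤ n ∧ iteratedFDeriv ℝ n g x ≠ 0 := by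
      by_contra hall
      push_neg at hall
      -- then g is locally constant, hence constant on the component of x
      obtain ⟨p, hp⟩ := hg x hxU
      obtain ⟨r, hr⟩ := hp
      have hconst : ∀ᶠ z in nhds x, g z = g x := by
        filter_upwards [EMetric.ball_mem_nhds x hr.r_pos] with z hz
        have hz' : z - x ∈ Metric.eball (0 : Eu) r := by
          rw [Metric.mem_eball, edist_eq_enorm_sub, sub_zero]
          rwa [Metric.mem_eball, edist_eq_enorm_sub] at hz
        have hsum := hr.hasSum_iteratedFDeriv hz'
        have hsingle : HasSum
            (fun n => ((Nat.factorial n : ℝ))⁻¹ • iteratedFDeriv ℝ n g x fun _ => z - x) (g x) := by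
          have := hasSum_single (f := fun n =>
              ((Nat.factorial n : ℝ))⁻¹ • iteratedFDeriv ℝ n g x fun _ => z - x) 0 (fun n hn => by
            simp [hall n (Nat.one_le_iff_ne_zero.mpr hn)])
          simpa [iteratedFDeriv_zero_apply] using this
        have := hsum.unique hsingle
        rwa [add_sub_cancel] at this
      have hC : IsPreconnected (connectedComponentIn U x) := isPreconnected_connectedComponentIn
      have hfan : AnalyticOnNhd ℝ (fun z => g z - g x) (connectedComponentIn U x) :=
        (hg.mono (connectedComponentIn_subset U x)).sub analyticOnNhd_const
      have heq := hfan.eqOn_zero_of_preconnected_of_eventuallyEq_zero hC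
        (mem_connectedComponentIn hxU)
        (by filter_upwards [hconst] with z hz; simp [hz])
      have : x ∈ {y | y ∈ U ∧ ∀ z ∈ connectedComponentIn U y, g z = g y} := by
        refine ⟨hxU, fun z hz => ?_⟩
        have := heq hz
        simpa [sub_eq_zero] using this
      rw [hUcont] at hxUc
      exact hxUc.2 this
    have hfind := Nat.find_spec hex
    set n₀ := Nat.find hex with hn₀
    have hn₀1 : n₀ ≠ 1 := by
      intro h1
      apply hfind.2
      rw [h1]
      ext w
      rw [iteratedFDeriv_one_apply, hxcrit]
      simp
    have hn₀2 : 2 ≤ n₀ := by omega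
    set m := n₀ - 1 with hm
    have hmn : m + 1 = n₀ := by omega
    have hm0 : iteratedFDeriv ℝ m g x = 0 := by
      by_contra hmne
      have : m < n₀ := by omega
      exact absurd ⟨by omega, hmne⟩ (Nat.find_min hex this)
    -- pick a dense-sequence tuple on which the (m+1)-st derivative is nonzero
    have hO : ∃ k, iteratedFDeriv ℝ (m + 1) g x (seq m k) ≠ 0 := by
      have hopen : IsOpen {w : Fin (m + 1) → Eu | iteratedFDeriv ℝ (m + 1) g x w ≠ 0} :=
        isOpen_compl_singleton.preimage (iteratedFDeriv ℝ (m + 1) g x).cont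
      have hne : {w : Fin (m + 1) → Eu | iteratedFDeriv ℝ (m + 1) g x w ≠ 0}.Nonempty := by
        by_contra hempty
        rw [Set.not_nonempty_iff_eq_empty] at hempty
        apply hfind.2
        rw [← hmn]
        ext w
        have : w ∉ {w : Fin (m + 1) → Eu | iteratedFDeriv ℝ (m + 1) g x w ≠ 0} := by
          rw [hempty]; exact Set.notMem_empty w
        simpa using this
      obtain ⟨k, hk⟩ := (TopologicalSpace.denseRange_denseSeq
        (Fin (m + 1) → Eu)).exists_mem_open hopen hne
      exact ⟨k, hk⟩
    obtain ⟨k, hk⟩ := hO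
    exact Set.mem_iUnion.mpr ⟨m, Set.mem_iUnion.mpr ⟨k, hxU, hm0, hk⟩⟩
  -- the non-critical part
  set T : Set Eu := {y | y ∈ Ucont ∧ fderiv ℝ g y ≠ 0 ∧ g y ∈ N} with hT
  have hTnull : volume T = 0 := by
    refine null_of_locally_null fun x hx => ?_
    obtain ⟨hxUc, hxcrit, -⟩ := hx
    have hxU : x ∈ U := hUcU hxUc
    set φ : Eu → ℝ := U.piecewise g 0 with hφ
    have hφm : Measurable φ :=
      ContinuousOn.measurable_piecewise hg.continuousOn continuousOn_const hU.measurableSet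
    have hφan : AnalyticOnNhd ℝ φ U :=
      hg.congr hU fun y hy => (Set.piecewise_eq_of_mem _ _ _ hy).symm
    have hder : fderiv ℝ φ x ≠ 0 := by
      have : fderiv ℝ φ x = fderiv ℝ g x := Filter.EventuallyEq.fderiv_eq
        (Filter.eventually_of_mem (hU.mem_nhds hxU)
          fun y hy => Set.piecewise_eq_of_mem _ _ _ hy)
      rw [this]; exact hxcrit
    obtain ⟨V, hVo, hxV, hVU, hVnull⟩ := gadget hU hφm hφan hxU hder
    refine ⟨V, hVo, hxV, measure_mono_null ?_ (hVnull N hN)⟩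
    rintro y ⟨hyV, hyUc, -, hyN⟩
    exact ⟨hyV, by rwa [Set.mem_preimage, hφ,
      Set.piecewise_eq_of_mem _ _ _ (hUcU hyUc)]⟩
  -- put everything together
  have hsub : Ucont ∩ g ⁻¹' N ⊆ (⋃ (m : ℕ) (k : ℕ), S m k) ∪ T := by
    rintro y ⟨hyUc, hyN⟩
    by_cases hcrit : fderiv ℝ g y = 0
    · exact Or.inl (hZcover ⟨hyUc, hcrit⟩)
    · exact Or.inr ⟨hyUc, hcrit, hyN⟩
  refine measure_mono_null hsub (measure_union_null ?_ hTnull)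
  exact measure_iUnion_null fun m => measure_iUnion_null fun k => hSnull m k

/-- Let `U ⊆ ℝ^d` (`d ≥ 1`) be an open set with finitely many connected components, let `g`
be real analytic on `U`, and let `μ` be a finite Borel measure concentrated on `U` and
absolutely continuous with respect to Lebesgue measure. With `Udisc` the union of the
components on which `g` is constant and `Ucont := U \ Udisc`, the pushforward of
`μ.restrict Ucont` under `g` is absolutely continuous with respect to Lebesgue measure on
`ℝ`, the pushforward of `μ.restrict Udisc` is supported on a finite set, and hence `g⁎μ` is
the sum of an absolutely continuous measure and a measure with finitely many atoms. -/
theorem stmt_11 (d : ℕ) (hd : 1 ≤ d) (U : Set (EuclideanSpace ℝ (Fin d))) (hU : IsOpen U)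
    (hcomp : {C : Set (EuclideanSpace ℝ (Fin d)) | ∃ x ∈ U, C = connectedComponentIn U x}.Finite)
    (g : EuclideanSpace ℝ (Fin d) → ℝ) (hg : AnalyticOnNhd ℝ g U)
    (μ : Measure (EuclideanSpace ℝ (Fin d))) [IsFiniteMeasure μ]
    (hμU : μ Uᶜ = 0) (hac : μ ≪ volume)
    (Udisc Ucont : Set (EuclideanSpace ℝ (Fin d)))
    (hUdisc : Udisc = {y | y ∈ U ∧ ∀ z ∈ connectedComponentIn U y, g z = g y})
    (hUcont : Ucont = U \ Udisc) :
    Measure.map g (μ.restrict Ucont) ≪ (volume : Measure ℝ) ∧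
    (∃ F : Finset ℝ, Measure.map g (μ.restrict Udisc) (↑F)ᶜ = 0) ∧
    (∃ ν₁ ν₂ : Measure ℝ, Measure.map g μ = ν₁ + ν₂ ∧ ν₁ ≪ (volume : Measure ℝ) ∧
      ∃ F : Finset ℝ, ν₂ (↑F)ᶜ = 0) := by
  classical
  have hUcont' : Ucont = U \ {y | y ∈ U ∧ ∀ z ∈ connectedComponentIn U y, g z = g y} := by
    rw [hUcont, hUdisc]
  have hUdiscU : Udisc ⊆ U := by rw [hUdisc]; exact fun y hy => hy.1
  have hUcU : Ucont ⊆ U := by rw [hUcont]; exact Set.diff_subset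
  -- `Udisc` is open (a union of components of the open set `U`)
  have hUdisc_open : IsOpen Udisc := by
    rw [isOpen_iff_mem_nhds]
    intro y hy
    have hyU := hUdiscU hy
    refine Filter.mem_of_superset
      ((hU.connectedComponentIn).mem_nhds (mem_connectedComponentIn hyU)) ?_
    intro z hz
    rw [hUdisc] at hy ⊢
    obtain ⟨-, hyall⟩ := hy
    have hzU : z ∈ U := connectedComponentIn_subset U y hz
    have hcc := connectedComponentIn_eq hz
    exact ⟨hzU, fun w hw => by rw [← hcc] at hw; rw [hyall w hw, hyall z hz]⟩
  have hUdiscM : MeasurableSet Udisc := hUdisc_open.measurableSet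
  have hUcontM : MeasurableSet Ucont := by
    rw [hUcont]; exact hU.measurableSet.diff hUdiscM
  -- a measurable modification of `g`
  set g' : EuclideanSpace ℝ (Fin d) → ℝ := U.piecewise g 0 with hg'
  have hg'm : Measurable g' :=
    ContinuousOn.measurable_piecewise hg.continuousOn continuousOn_const hU.measurableSet
  have hgg'U : ∀ y ∈ U, g y = g' y := fun y hy => (Set.piecewise_eq_of_mem _ _ _ hy).symm
  have hgae_cont : g =ᵐ[μ.restrict Ucont] g' := by
    filter_upwards [ae_restrict_mem hUcontM] with y hy
    exact hgg'U y (hUcU hy)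
  have hgae_disc : g =ᵐ[μ.restrict Udisc] g' := by
    filter_upwards [ae_restrict_mem hUdiscM] with y hy
    exact hgg'U y (hUdiscU hy)
  -- absolute continuity of the continuous part
  have H1 : Measure.map g (μ.restrict Ucont) ≪ (volume : Measure ℝ) := by
    rw [Measure.map_congr hgae_cont]
    intro s hs
    obtain ⟨s', hss', hs'm, hs'0⟩ := exists_measurable_superset_of_null hs
    refine measure_mono_null hss' ?_
    rw [Measure.map_apply hg'm hs'm, Measure.restrict_apply (hg'm hs'm)]
    refine hac (measure_mono_null ?_ (main_null hU hg hUcont' hs'0))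
    rintro y ⟨hys, hyUc⟩
    exact ⟨hyUc, by rwa [Set.mem_preimage, hgg'U y (hUcU hyUc)]⟩
  -- the discrete part is supported on a finite set
  have hfin : (g '' Udisc).Finite := by
    refine (hcomp.image fun C : Set (EuclideanSpace ℝ (Fin d)) =>
      if h : C.Nonempty then g h.some else 0).subset ?_
    rintro - ⟨y, hy, rfl⟩
    have hyU := hUdiscU hy
    refine ⟨connectedComponentIn U y, ⟨y, hyU, rfl⟩, ?_⟩
    have hne : (connectedComponentIn U y).Nonempty := ⟨y, mem_connectedComponentIn hyU⟩
    simp only [dif_pos hne]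
    rw [hUdisc] at hy
    exact hy.2 hne.some hne.some_mem
  set F : Finset ℝ := hfin.toFinset with hF
  have H2 : Measure.map g (μ.restrict Udisc) (↑F)ᶜ = 0 := by
    rw [Measure.map_congr hgae_disc,
      Measure.map_apply hg'm (F.measurableSet.compl),
      Measure.restrict_apply (hg'm F.measurableSet.compl)]
    refine measure_mono_null ?_ (measure_empty (μ := μ))
    rintro y ⟨hyc, hyd⟩
    exact absurd (by
      rw [hF, Set.Finite.coe_toFinset]
      exact ⟨y, hyd, hgg'U y (hUdiscU hyd)⟩ : g' y ∈ (↑F : Set ℝ)) hyc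
  refine ⟨H1, ⟨F, H2⟩, Measure.map g (μ.restrict Ucont), Measure.map g (μ.restrict Udisc),
    ?_, H1, F, H2⟩
  -- the decomposition of the pushforward
  have hgae : g =ᵐ[μ] g' := by
    have hUae : ∀ᵐ y ∂μ, y ∈ U := mem_ae_iff.mpr hμU
    filter_upwards [hUae] with y hy using hgg'U y hy
  have hres : μ = μ.restrict Ucont + μ.restrict Udisc := by
    have hae : ∀ᵐ y ∂μ, y ∈ U := mem_ae_iff.mpr hμU
    conv_lhs => rw [← Measure.restrict_eq_self_of_ae_mem hae]
    have hUeq : U = Ucont ∪ Udisc := by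
      rw [hUcont]; exact (Set.diff_union_of_subset hUdiscU).symm
    rw [hUeq, Measure.restrict_union _ hUdiscM]
    rw [hUcont]
    exact Set.disjoint_sdiff_left
  rw [Measure.map_congr hgae, Measure.map_congr hgae_cont, Measure.map_congr hgae_disc]
  conv_lhs => rw [hres]
  rw [Measure.map_add _ _ hg'm]
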